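/- Let K be an algebraically closed field and let M = {(α,β) ∈ K × K : α ≠ 0, β ≠ 0, αβ ≠ −1}. Then every point (α',β') ∈ M is 𝒩-equivalent to a point of the form (α, 1) with α ≠ 0 and α ≠ −1. -/
import Mathlib


/-- The step relation generating the partial action of the group `𝒩` on `K × K`. -/
def Rstep {K : Type*} [Field K] (p q : K × K) : Prop :=
  (∃ s : K, s ≠ 0 ∧ q = (s ^ 2 * p.1, s⁻¹ ^ 2 * p.2)) ∨
  (p.2 ≠ 0 ∧ q = (p.2⁻¹ * (1 + p.1 * p.2), -p.2)) ∨
  (p.1 ≠ 0 ∧ q = (-p.1⁻¹, p.1 * (1 + p.1 * p.2))) ∨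
  (1 + p.1 * p.2 ≠ 0 ∧ q = (-p.2 * (1 + p.1 * p.2)⁻¹, -p.1 * (1 + p.1 * p.2)))

/-- Every point of `M = {(α,β) : α ≠ 0, β ≠ 0, αβ ≠ -1}` is 𝒩-equivalent to a point
`(α, 1)` with `α ≠ 0, -1`. -/
theorem exists_rep_in_M1 {K : Type*} [Field K] [IsAlgClosed K]
    (p : K × K) (h1 : p.1 ≠ 0) (h2 : p.2 ≠ 0) (h3 : p.1 * p.2 ≠ -1) :
    ∃ α : K, α ≠ 0 ∧ α ≠ -1 ∧ Relation.EqvGen Rstep p (α, (1 : K)) := by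
  obtain ⟨s, hs⟩ := IsAlgClosed.exists_pow_nat_eq p.2 (n := 2) (by norm_num)
  have hs0 : s ≠ 0 := by
    intro h; rw [h] at hs; simp at hs; exact h2 hs.symm
  refine ⟨p.1 * p.2, mul_ne_zero h1 h2, h3, ?_⟩
  apply Relation.EqvGen.rel
  left
  exact ⟨s, hs0, by rw [← hs, inv_pow, inv_mul_cancel₀ (pow_ne_zero 2 hs0), hs, mul_comm]⟩
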